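/- For every record type ρ ∈ 𝕋_R there exist a finite set I of pairwise distinct labels and types σ_l (l ∈ I) such that ρ = ⟨l:σ_l | l ∈ I⟩; that is, every record type is equal (with respect to mutual subtyping) to an intersection of unary record types, so the type-merge constructor + is eliminable up to type equality. -/

import Mathlib

/-- Intersection and record types `𝕋`. Record types are the types satisfying `IsRec`. -/
inductive Ty where
  | const : Nat → Ty
  | omega : Ty
  | arrow : Ty → Ty → Ty
  | inter : Ty → Ty → Ty
  | empty : Ty
  | fld : Nat → Ty → Ty
  | merge : Ty → Ty → Ty
deriving DecidableEq

/-- The record types `𝕋_R ⊆ 𝕋`. -/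
inductive IsRec : Ty → Prop where
  | empty : IsRec .empty
  | fld (l : Nat) (σ : Ty) : IsRec (.fld l σ)
  | merge {ρ₁ ρ₂ : Ty} : IsRec ρ₁ → IsRec ρ₂ → IsRec (.merge ρ₁ ρ₂)
  | inter {ρ₁ ρ₂ : Ty} : IsRec ρ₁ → IsRec ρ₂ → IsRec (.inter ρ₁ ρ₂)

/-- Subtyping on `𝕋`: the least preorder satisfying the BCD axioms together with
the record and record-merge axioms. -/
inductive TySub : Ty → Ty → Prop where
  | refl (σ : Ty) : TySub σ σ
  | trans {σ τ υ : Ty} : TySub σ τ → TySub τ υ → TySub σ υ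
  | le_omega (σ : Ty) : TySub σ .omega
  | omega_arrow : TySub .omega (.arrow .omega .omega)
  | inter_left (σ τ : Ty) : TySub (.inter σ τ) σ
  | inter_right (σ τ : Ty) : TySub (.inter σ τ) τ
  | le_inter {σ τ₁ τ₂ : Ty} : TySub σ τ₁ → TySub σ τ₂ → TySub σ (.inter τ₁ τ₂)
  | arrow_inter (σ τ₁ τ₂ : Ty) :
      TySub (.inter (.arrow σ τ₁) (.arrow σ τ₂)) (.arrow σ (.inter τ₁ τ₂))
  | arrow_mono {σ₁ σ₂ τ₁ τ₂ : Ty} : TySub σ₂ σ₁ → TySub τ₁ τ₂ →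
      TySub (.arrow σ₁ τ₁) (.arrow σ₂ τ₂)
  | fld_empty (l : Nat) (σ : Ty) : TySub (.fld l σ) .empty
  | fld_inter (l : Nat) (σ τ : Ty) :
      TySub (.inter (.fld l σ) (.fld l τ)) (.fld l (.inter σ τ))
  | fld_mono {σ τ : Ty} (l : Nat) : TySub σ τ → TySub (.fld l σ) (.fld l τ)
  | merge_empty_r {ρ : Ty} : IsRec ρ → TySub (.merge ρ .empty) ρ
  | merge_empty_r' {ρ : Ty} : IsRec ρ → TySub ρ (.merge ρ .empty)
  | merge_empty_l {ρ : Ty} : IsRec ρ → TySub (.merge .empty ρ) ρ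
  | merge_empty_l' {ρ : Ty} : IsRec ρ → TySub ρ (.merge .empty ρ)
  | merge_assoc {ρ₁ ρ₂ ρ₃ : Ty} : IsRec ρ₁ → IsRec ρ₂ → IsRec ρ₃ →
      TySub (.merge (.merge ρ₁ ρ₂) ρ₃) (.merge ρ₁ (.merge ρ₂ ρ₃))
  | merge_assoc' {ρ₁ ρ₂ ρ₃ : Ty} : IsRec ρ₁ → IsRec ρ₂ → IsRec ρ₃ →
      TySub (.merge ρ₁ (.merge ρ₂ ρ₃)) (.merge (.merge ρ₁ ρ₂) ρ₃)
  | merge_inter {ρ₁ ρ₂ ρ₃ : Ty} : IsRec ρ₁ → IsRec ρ₂ → IsRec ρ₃ →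
      TySub (.merge (.inter ρ₁ ρ₂) ρ₃) (.inter (.merge ρ₁ ρ₃) (.merge ρ₂ ρ₃))
  | merge_inter' {ρ₁ ρ₂ ρ₃ : Ty} : IsRec ρ₁ → IsRec ρ₂ → IsRec ρ₃ →
      TySub (.inter (.merge ρ₁ ρ₃) (.merge ρ₂ ρ₃)) (.merge (.inter ρ₁ ρ₂) ρ₃)
  | fld_absorb {ρ : Ty} (l : Nat) (σ τ : Ty) : IsRec ρ →
      TySub (.merge (.fld l σ) (.inter (.fld l τ) ρ)) (.inter (.fld l τ) ρ)
  | fld_absorb' {ρ : Ty} (l : Nat) (σ τ : Ty) : IsRec ρ →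
      TySub (.inter (.fld l τ) ρ) (.merge (.fld l σ) (.inter (.fld l τ) ρ))
  | fld_comm {ρ : Ty} {l l' : Nat} (σ τ : Ty) : l ≠ l' → IsRec ρ →
      TySub (.merge (.fld l σ) (.inter (.fld l' τ) ρ))
          (.inter (.fld l' τ) (.merge (.fld l σ) ρ))
  | fld_comm' {ρ : Ty} {l l' : Nat} (σ τ : Ty) : l ≠ l' → IsRec ρ →
      TySub (.inter (.fld l' τ) (.merge (.fld l σ) ρ))
          (.merge (.fld l σ) (.inter (.fld l' τ) ρ))
  | merge_mono_l {ρ₁ ρ₂ ρ : Ty} : IsRec ρ₁ → IsRec ρ₂ → IsRec ρ →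
      TySub ρ₁ ρ₂ → TySub (.merge ρ₁ ρ) (.merge ρ₂ ρ)
  | merge_congr_r {ρ ρ₁ ρ₂ : Ty} : IsRec ρ → IsRec ρ₁ → IsRec ρ₂ →
      TySub ρ₁ ρ₂ → TySub ρ₂ ρ₁ → TySub (.merge ρ ρ₁) (.merge ρ ρ₂)

/-- Type equality: mutual subtyping. -/
def TyEq (σ τ : Ty) : Prop := TySub σ τ ∧ TySub τ σ
/-- `⟨l : σ_l | l ∈ I⟩`: the intersection of unary record types over a list of labels. -/
def recTy (σ : Nat → Ty) : List Nat → Ty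
  | [] => .empty
  | [l] => .fld l (σ l)
  | l :: l' :: ls => .inter (.fld l (σ l)) (recTy σ (l' :: ls))

lemma tyEq_refl (σ : Ty) : TyEq σ σ := ⟨.refl σ, .refl σ⟩
lemma tyEq_symm {σ τ} (h : TyEq σ τ) : TyEq τ σ := ⟨h.2, h.1⟩
lemma tyEq_trans {σ τ υ} (h1 : TyEq σ τ) (h2 : TyEq τ υ) : TyEq σ υ :=
  ⟨h1.1.trans h2.1, h2.2.trans h1.2⟩

lemma tySub_inter_mono {a a' b b'} (h1 : TySub a a') (h2 : TySub b b') :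
    TySub (.inter a b) (.inter a' b') :=
  .le_inter ((TySub.inter_left a b).trans h1) ((TySub.inter_right a b).trans h2)

lemma tyEq_inter {a a' b b'} (h1 : TyEq a a') (h2 : TyEq b b') :
    TyEq (.inter a b) (.inter a' b') :=
  ⟨tySub_inter_mono h1.1 h2.1, tySub_inter_mono h1.2 h2.2⟩

lemma isRec_recTy (σ : Nat → Ty) : ∀ I, IsRec (recTy σ I)
  | [] => .empty
  | [l] => .fld l _
  | _ :: l' :: ls => .inter (.fld _ _) (isRec_recTy σ (l'::ls))

lemma tyEq_merge {a a' b b'} (ha : IsRec a) (ha' : IsRec a') (hb : IsRec b) (hb' : IsRec b')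
    (h1 : TyEq a a') (h2 : TyEq b b') : TyEq (.merge a b) (.merge a' b') :=
  ⟨(TySub.merge_mono_l ha ha' hb h1.1).trans (TySub.merge_congr_r ha' hb hb' h2.1 h2.2),
   (TySub.merge_mono_l ha' ha hb' h1.2).trans (TySub.merge_congr_r ha hb' hb h2.2 h2.1)⟩

lemma recTy_cons (σ : Nat → Ty) (l : Nat) (ls : List Nat) :
    TyEq (recTy σ (l :: ls)) (.inter (.fld l (σ l)) (recTy σ ls)) := by
  cases ls with
  | nil => exact ⟨.le_inter (.refl _) (.fld_empty l _), .inter_left _ _⟩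
  | cons l' ls => exact tyEq_refl _

lemma recTy_le_fld {σ : Nat → Ty} {I : List Nat} {l : Nat} (h : l ∈ I) :
    TySub (recTy σ I) (.fld l (σ l)) := by
  induction I with
  | nil => simp at h
  | cons a ls ih =>
    rcases List.mem_cons.mp h with rfl | h
    · exact (recTy_cons σ _ ls).1.trans (.inter_left _ _)
    · exact (recTy_cons σ a ls).1.trans ((TySub.inter_right _ _).trans (ih h))

lemma recTy_le_empty (σ : Nat → Ty) (I : List Nat) : TySub (recTy σ I) .empty := by
  cases I with
  | nil => exact .refl _
  | cons a ls => exact (recTy_le_fld List.mem_cons_self).trans (.fld_empty a _)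

lemma le_recTy {ρ : Ty} {σ : Nat → Ty} (he : TySub ρ .empty) :
    ∀ {I : List Nat}, (∀ l ∈ I, TySub ρ (.fld l (σ l))) → TySub ρ (recTy σ I)
  | [], _ => he
  | a :: ls, h =>
    (TySub.le_inter (h a List.mem_cons_self)
      (le_recTy he (fun l hl => h l (List.mem_cons_of_mem a hl)))).trans
      (recTy_cons σ a ls).2

lemma inter_recTy {σ τ : Nat → Ty} {I J : List Nat} (hI : I.Nodup) (hJ : J.Nodup) :
    ∃ K υ, K.Nodup ∧ TyEq (.inter (recTy σ I) (recTy τ J)) (recTy υ K) := by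
  classical
  refine ⟨I ++ J.filter (fun l => l ∉ I),
    fun l => if l ∈ I then (if l ∈ J then .inter (σ l) (τ l) else σ l) else τ l, ?_, ?_, ?_⟩
  · refine hI.append (hJ.filter _) ?_
    intro a haI haF
    have := List.of_mem_filter haF
    simp at this
    exact this haI
  · apply le_recTy ((TySub.inter_left _ _).trans (recTy_le_empty σ I))
    intro l hl
    rcases List.mem_append.mp hl with hlI | hlF
    · by_cases hlJ : l ∈ J
      · simp only [if_pos hlI, if_pos hlJ]
        exact (TySub.le_inter ((TySub.inter_left _ _).trans (recTy_le_fld hlI))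
          ((TySub.inter_right _ _).trans (recTy_le_fld hlJ))).trans (.fld_inter l _ _)
      · simp only [if_pos hlI, if_neg hlJ]
        exact (TySub.inter_left _ _).trans (recTy_le_fld hlI)
    · have hlJ : l ∈ J := List.mem_of_mem_filter hlF
      have hlI : l ∉ I := by have := List.of_mem_filter hlF; simpa using this
      simp only [if_neg hlI]
      exact (TySub.inter_right _ _).trans (recTy_le_fld hlJ)
  · apply TySub.le_inter
    · apply le_recTy (recTy_le_empty _ _)
      intro l hlI
      have h1 := recTy_le_fld (σ := fun l => if l ∈ I then (if l ∈ J then Ty.inter (σ l) (τ l) else σ l) else τ l)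
        (I := I ++ J.filter (fun l => l ∉ I)) (List.mem_append_left _ hlI)
      by_cases hlJ : l ∈ J
      · simp only [if_pos hlI, if_pos hlJ] at h1
        exact h1.trans (.fld_mono l (.inter_left _ _))
      · simpa only [if_pos hlI, if_neg hlJ] using h1
    · apply le_recTy (recTy_le_empty _ _)
      intro l hlJ
      by_cases hlI : l ∈ I
      · have h1 := recTy_le_fld (σ := fun l => if l ∈ I then (if l ∈ J then Ty.inter (σ l) (τ l) else σ l) else τ l)
          (I := I ++ J.filter (fun l => l ∉ I)) (List.mem_append_left _ hlI)
        simp only [if_pos hlI, if_pos hlJ] at h1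
        exact h1.trans (.fld_mono l (.inter_right _ _))
      · have hmem : l ∈ J.filter (fun l => l ∉ I) := by
          simp [List.mem_filter, hlJ, hlI]
        have h1 := recTy_le_fld (σ := fun l => if l ∈ I then (if l ∈ J then Ty.inter (σ l) (τ l) else σ l) else τ l)
          (I := I ++ J.filter (fun l => l ∉ I)) (List.mem_append_right _ hmem)
        simpa only [if_neg hlI] using h1

lemma merge_fld {τ : Nat → Ty} {l : Nat} (σ : Ty) :
    ∀ {J : List Nat}, J.Nodup →
    TyEq (.merge (.fld l σ) (recTy τ J))
      (if l ∈ J then recTy τ J else recTy (Function.update τ l σ) (J ++ [l])) := by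
  intro J
  induction J with
  | nil =>
    intro _
    simp only [List.not_mem_nil, if_false, List.nil_append, recTy, Function.update_self]
    exact ⟨.merge_empty_r (.fld l σ), .merge_empty_r' (.fld l σ)⟩
  | cons l' rest ih =>
    intro hnd
    have hrest : rest.Nodup := hnd.of_cons
    have hR : IsRec (recTy τ rest) := isRec_recTy τ rest
    have step1 : TyEq (.merge (.fld l σ) (recTy τ (l'::rest)))
        (.merge (.fld l σ) (.inter (.fld l' (τ l')) (recTy τ rest))) :=
      tyEq_merge (.fld _ _) (.fld _ _) (isRec_recTy τ _) (.inter (.fld _ _) hR)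
        (tyEq_refl _) (recTy_cons τ l' rest)
    by_cases hll' : l = l'
    · subst hll'
      simp only [List.mem_cons, true_or, if_pos]
      have step2 : TyEq (.merge (.fld l σ) (.inter (.fld l (τ l)) (recTy τ rest)))
          (.inter (.fld l (τ l)) (recTy τ rest)) :=
        ⟨.fld_absorb l σ (τ l) hR, .fld_absorb' l σ (τ l) hR⟩
      exact tyEq_trans (tyEq_trans step1 step2) (tyEq_symm (recTy_cons τ l rest))
    · have step2 : TyEq (.merge (.fld l σ) (.inter (.fld l' (τ l')) (recTy τ rest)))
          (.inter (.fld l' (τ l')) (.merge (.fld l σ) (recTy τ rest))) :=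
        ⟨.fld_comm σ (τ l') hll' hR, .fld_comm' σ (τ l') hll' hR⟩
      by_cases hmem : l ∈ rest
      · have hin : l ∈ l' :: rest := List.mem_cons_of_mem _ hmem
        simp only [if_pos hin]
        have ih' := ih hrest
        simp only [if_pos hmem] at ih'
        exact tyEq_trans (tyEq_trans (tyEq_trans step1 step2)
          (tyEq_inter (tyEq_refl _) ih')) (tyEq_symm (recTy_cons τ l' rest))
      · have hnin : l ∉ l' :: rest := by simp [hll', hmem]
        simp only [if_neg hnin]
        have ih' := ih hrest
        simp only [if_neg hmem] at ih'
        have hupd : τ l' = Function.update τ l σ l' := by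
          rw [Function.update_of_ne (Ne.symm hll')]
        have step3 : TyEq (.merge (.fld l σ) (recTy τ (l'::rest)))
            (.inter (.fld l' (Function.update τ l σ l')) (recTy (Function.update τ l σ) (rest ++ [l]))) := by
          rw [← hupd]
          exact tyEq_trans (tyEq_trans step1 step2) (tyEq_inter (tyEq_refl _) ih')
        have : (l' :: rest) ++ [l] = l' :: (rest ++ [l]) := rfl
        rw [this]
        exact tyEq_trans step3 (tyEq_symm (recTy_cons (Function.update τ l σ) l' (rest ++ [l])))

lemma merge_fld' {τ : Nat → Ty} {l : Nat} (σ : Ty) {J : List Nat} (hJ : J.Nodup) :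
    ∃ K υ, K.Nodup ∧ TyEq (.merge (.fld l σ) (recTy τ J)) (recTy υ K) := by
  classical
  have h := merge_fld (τ := τ) (l := l) σ hJ
  by_cases hl : l ∈ J
  · rw [if_pos hl] at h; exact ⟨J, τ, hJ, h⟩
  · rw [if_neg hl] at h
    refine ⟨J ++ [l], Function.update τ l σ, ?_, h⟩
    simp [List.nodup_append, hJ, hl]
    intro a ha hal; exact hl (hal ▸ ha)

lemma merge_recTy {σ τ : Nat → Ty} : ∀ {I : List Nat}, I.Nodup → ∀ {J : List Nat}, J.Nodup →
    ∃ K υ, K.Nodup ∧ TyEq (.merge (recTy σ I) (recTy τ J)) (recTy υ K) := by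
  intro I
  induction I with
  | nil =>
    intro _ J hJ
    exact ⟨J, τ, hJ, ⟨.merge_empty_l (isRec_recTy τ J), .merge_empty_l' (isRec_recTy τ J)⟩⟩
  | cons a ls ih =>
    intro hI J hJ
    have hls : ls.Nodup := hI.of_cons
    have hR : IsRec (recTy τ J) := isRec_recTy τ J
    have hRl : IsRec (recTy σ ls) := isRec_recTy σ ls
    have step1 : TyEq (.merge (recTy σ (a::ls)) (recTy τ J))
        (.merge (.inter (.fld a (σ a)) (recTy σ ls)) (recTy τ J)) :=
      tyEq_merge (isRec_recTy σ _) (.inter (.fld _ _) hRl) hR hR (recTy_cons σ a ls) (tyEq_refl _)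
    have step2 : TyEq (.merge (.inter (.fld a (σ a)) (recTy σ ls)) (recTy τ J))
        (.inter (.merge (.fld a (σ a)) (recTy τ J)) (.merge (recTy σ ls) (recTy τ J))) :=
      ⟨.merge_inter (.fld _ _) hRl hR, .merge_inter' (.fld _ _) hRl hR⟩
    obtain ⟨K1, υ1, hK1, h1⟩ := merge_fld' (τ := τ) (l := a) (σ a) hJ
    obtain ⟨K2, υ2, hK2, h2⟩ := ih hls hJ
    obtain ⟨K, υ, hK, h3⟩ := inter_recTy (σ := υ1) (τ := υ2) hK1 hK2
    exact ⟨K, υ, hK, tyEq_trans (tyEq_trans (tyEq_trans step1 step2) (tyEq_inter h1 h2)) h3⟩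

/-- Every record type is equal (mutual subtyping) to an intersection of unary
record types over a finite set of pairwise distinct labels; hence `+` is
eliminable up to type equality. -/
theorem record_normal_form (ρ : Ty) (h : IsRec ρ) :
    ∃ (I : List Nat) (σ : Nat → Ty), I.Nodup ∧ TyEq ρ (recTy σ I) := by
  induction h with
  | empty => exact ⟨[], fun _ => .omega, List.nodup_nil, tyEq_refl _⟩
  | fld l σ => exact ⟨[l], fun _ => σ, List.nodup_singleton l, tyEq_refl _⟩
  | merge h1 h2 ih1 ih2 =>
    obtain ⟨I1, σ1, hI1, e1⟩ := ih1
    obtain ⟨I2, σ2, hI2, e2⟩ := ih2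
    obtain ⟨K, υ, hK, h3⟩ := merge_recTy (σ := σ1) (τ := σ2) hI1 hI2
    exact ⟨K, υ, hK, tyEq_trans (tyEq_merge ‹_› (isRec_recTy σ1 I1) ‹_› (isRec_recTy σ2 I2) e1 e2) h3⟩
  | inter h1 h2 ih1 ih2 =>
    obtain ⟨I1, σ1, hI1, e1⟩ := ih1
    obtain ⟨I2, σ2, hI2, e2⟩ := ih2
    obtain ⟨K, υ, hK, h3⟩ := inter_recTy (σ := σ1) (τ := σ2) hI1 hI2
    exact ⟨K, υ, hK, tyEq_trans (tyEq_inter e1 e2) h3⟩
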